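/- Let $L\ge 1$, $k\ge 2$ be integers and $\mathbb{F}$ a field. Fix total orderings $\preceq^1,\dots,\preceq^k$ on $[L]$ and let $\preceq$ be the resulting product partial order on $[L]^k$. Suppose $f:[L]^k\to\mathbb{F}$ is such that the support $S=\{(\ell_1,\dots,\ell_k): f(\ell_1,\dots,\ell_k)\ne 0\}$ is an antichain with respect to $\preceq$. Then the slice rank of $f$ equals $\min_{S=S_1\cup\dots\cup S_k}(|\pi_1(S_1)|+\dots+|\pi_k(S_k)|)$, where the minimum is over all partitions of $S$ into $k$ parts and $\pi_i$ denotes projection to the $i$-th coordinate. -/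

import Mathlib

open Finset


/-- A function `f : [L]^k → F` has slice rank 1 if it factors as a nonzero function of one
coordinate times a nonzero function of the remaining `k-1` coordinates. -/
def IsSliceRankOne {k L : ℕ} {F : Type*} [Field F] (f : (Fin k → Fin L) → F) : Prop :=
  ∃ (i : Fin k) (g : Fin L → F) (h : ({j : Fin k // j ≠ i} → Fin L) → F),
    g ≠ 0 ∧ h ≠ 0 ∧ ∀ x, f x = g (x i) * h (fun j => x j.1)

/-- The slice rank of `f : [L]^k → F`: the least `r` such that `f` is a sum of `r`
slice-rank-1 functions. -/
noncomputable def sliceRank {k L : ℕ} {F : Type*} [Field F] (f : (Fin k → Fin L) → F) : ℕ :=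
  sInf {r : ℕ | ∃ g : Fin r → (Fin k → Fin L) → F,
    (∀ t, IsSliceRankOne (g t)) ∧ ∀ x, f x = ∑ t, g t x}

lemma exists_rel_max {α β : Type*} (r : β → β → Prop)
    (htot : ∀ a b, r a b ∨ r b a) (htrans : ∀ {a b c}, r a b → r b c → r a c)
    (s : Finset α) (f : α → β) (hs : s.Nonempty) :
    ∃ m ∈ s, ∀ b ∈ s, r (f b) (f m) := by
  have hrfl : ∀ a : β, r a a := fun a => by rcases htot a a with h | h <;> exact h
  induction hs using Finset.Nonempty.cons_induction with
  | singleton a =>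
      refine ⟨a, by simp, ?_⟩
      intro b hb
      simp only [Finset.mem_singleton] at hb
      subst hb
      exact hrfl _
  | cons a s ha hs ih =>
      obtain ⟨m, hm, hmax⟩ := ih
      rcases htot (f m) (f a) with h | h
      · refine ⟨a, Finset.mem_cons_self a s, ?_⟩
        intro b hb
        rcases Finset.mem_cons.1 hb with rfl | hb
        · exact hrfl _
        · exact htrans (hmax b hb) h
      · refine ⟨m, Finset.mem_cons.2 (Or.inr hm), ?_⟩
        intro b hb
        rcases Finset.mem_cons.1 hb with rfl | hb
        · exact h
        · exact hmax b hb

lemma exists_annihilator {L : ℕ} {F : Type*} [Field F] (r : Fin L → Fin L → Prop)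
    (hrefl : ∀ a, r a a) (V : Submodule F (Fin L → F)) (p : Fin L)
    (hp : ∀ v ∈ V, v p ≠ 0 → ∃ b, r p b ∧ b ≠ p ∧ v b ≠ 0) :
    ∃ φ : Fin L → F, φ p = 1 ∧ (∀ b, φ b ≠ 0 → r p b) ∧ ∀ v ∈ V, ∑ ℓ, φ ℓ * v ℓ = 0 := by
  classical
  set D := {b : Fin L // r p b} with hD
  set ρ : (Fin L → F) →ₗ[F] (D → F) := LinearMap.funLeft F F (fun d : D => (d : Fin L)) with hρdef
  set W := V.map ρ with hW
  set e : D → F := fun d => if (d : Fin L) = p then 1 else 0 with he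
  have heW : e ∉ W := by
    rintro ⟨v, hv, hve⟩
    have hvp : v p = 1 := by
      have := congrFun hve ⟨p, hrefl p⟩
      simpa [hρdef, LinearMap.funLeft, he] using this
    obtain ⟨b, hrb, hbp, hvb⟩ := hp v hv (by rw [hvp]; exact one_ne_zero)
    have := congrFun hve ⟨b, hrb⟩
    simp [hρdef, LinearMap.funLeft, he, hbp] at this
    exact hvb this
  obtain ⟨ψ, hψe, hψW⟩ := Submodule.exists_dual_map_eq_bot_of_notMem heW inferInstance
  have hw0 : ∀ w ∈ W, ψ w = 0 := by
    intro w hw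
    have : ψ w ∈ W.map ψ := Submodule.mem_map_of_mem hw
    rw [hψW] at this
    exact (Submodule.mem_bot F).1 this
  set χ : Fin L → (D → F) := fun b => fun d => if (d : Fin L) = b then 1 else 0 with hχ
  refine ⟨fun b => (ψ e)⁻¹ * ψ (χ b), ?_, ?_, ?_⟩
  · have hpe : χ p = e := by funext d; simp [hχ, he]
    show (ψ e)⁻¹ * ψ (χ p) = 1
    rw [hpe, inv_mul_cancel₀ hψe]
  · intro b hb
    by_contra hrb
    apply hb
    have hzero : χ b = 0 := by
      funext d
      have : (d : Fin L) ≠ b := fun h => hrb (h ▸ d.2)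
      simp [hχ, this]
    show (ψ e)⁻¹ * ψ (χ b) = 0
    rw [hzero, map_zero, mul_zero]
  · intro v hv
    have hρv : ψ (ρ v) = 0 := hw0 _ (Submodule.mem_map_of_mem hv)
    have hkey : ψ (ρ v) = ∑ d : D, v (d : Fin L) * ψ (χ (d : Fin L)) := by
      rw [LinearMap.pi_apply_eq_sum_univ]
      refine Finset.sum_congr rfl fun d _ => ?_
      have h1 : (fun j : D => if d = j then (1:F) else 0) = χ (d : Fin L) := by
        funext j
        by_cases h : d = j
        · simp [h, hχ]
        · have : (j : Fin L) ≠ (d : Fin L) := fun hh => h (Subtype.ext hh.symm)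
          simp [h, hχ, this]
      rw [h1, smul_eq_mul]
      rfl
    show ∑ ℓ, (ψ e)⁻¹ * ψ (χ ℓ) * v ℓ = 0
    have h0 : ∀ ℓ ∈ Finset.univ, (ψ e)⁻¹ * ψ (χ ℓ) * v ℓ ≠ 0 → r p ℓ := by
      intro ℓ _ hne
      by_contra hrb
      apply hne
      have hzero : χ ℓ = 0 := by
        funext d
        have : (d : Fin L) ≠ ℓ := fun h => hrb (h ▸ d.2)
        simp [hχ, this]
      rw [hzero, map_zero, mul_zero, zero_mul]
    rw [← Finset.sum_filter_of_ne h0,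
      Finset.sum_subtype (p := fun ℓ => r p ℓ) (Finset.univ.filter (r p ·)) (fun x => by simp)
        (fun ℓ => (ψ e)⁻¹ * ψ (χ ℓ) * v ℓ)]
    have : ∑ d : D, (ψ e)⁻¹ * ψ (χ (d : Fin L)) * v (d : Fin L)
        = (ψ e)⁻¹ * ∑ d : D, v (d : Fin L) * ψ (χ (d : Fin L)) := by
      rw [Finset.mul_sum]
      exact Finset.sum_congr rfl fun d _ => by ring
    rw [this, ← hkey, hρv, mul_zero]

lemma cover_of_decomp {k L r : ℕ} {F : Type*} [Field F]
    (le : Fin k → Fin L → Fin L → Prop) (hle : ∀ i, IsLinearOrder (Fin L) (le i))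
    (f : (Fin k → Fin L) → F)
    (hanti : ∀ x ∈ {x : Fin k → Fin L | f x ≠ 0}, ∀ y ∈ {x : Fin k → Fin L | f x ≠ 0},
      (∀ i, le i (x i) (y i)) → x = y)
    (g : Fin r → (Fin k → Fin L) → F) (hg : ∀ t, IsSliceRankOne (g t))
    (hsum : ∀ x, f x = ∑ t, g t x) :
    ∃ S : Fin k → Set (Fin k → Fin L), (⋃ i, S i) = {x : Fin k → Fin L | f x ≠ 0} ∧
      ∑ i, Set.ncard ((fun x => x i) '' S i) ≤ r := by
  classical
  have hrefl : ∀ i a, le i a a := fun i a => by haveI := hle i; exact refl_of (le i) a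
  have htot : ∀ i a b, le i a b ∨ le i b a := fun i a b => by
    haveI := hle i; exact total_of (le i) a b
  have htrans : ∀ i {a b c}, le i a b → le i b c → le i a c := fun i a b c hab hbc => by
    haveI := hle i; exact _root_.trans hab hbc
  choose idx γ η hγ hη hfac using hg
  set fiber : Fin k → Finset (Fin r) := fun i => Finset.univ.filter (fun t => idx t = i) with hfiber
  set Vset : Fin k → Finset (Fin L → F) := fun i => (fiber i).image γ with hVset
  set V : Fin k → Submodule F (Fin L → F) := fun i => Submodule.span F (↑(Vset i)) with hV
  set B : Fin k → Set (Fin L) :=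
    fun i => {ℓ | ∃ v ∈ V i, v ℓ ≠ 0 ∧ ∀ b, le i ℓ b → b ≠ ℓ → v b = 0} with hB
  -- cover claim
  have hcover : ∀ x : Fin k → Fin L, f x ≠ 0 → ∃ i, x i ∈ B i := by
    intro x hx
    by_contra hno
    push_neg at hno
    have hφ : ∀ i : Fin k, ∃ φ : Fin L → F, φ (x i) = 1 ∧ (∀ b, φ b ≠ 0 → le i (x i) b) ∧
        ∀ v ∈ V i, ∑ ℓ, φ ℓ * v ℓ = 0 := by
      intro i
      apply exists_annihilator (le i) (hrefl i) (V i) (x i)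
      intro v hv hvp
      by_contra hcon
      push_neg at hcon
      exact hno i ⟨v, hv, hvp, fun b hb hbne => hcon b hb hbne⟩
    choose φ hφ1 hφsupp hφann using hφ
    -- the contraction
    set c : F := ∑ y : Fin k → Fin L, (∏ i, φ i (y i)) * f y with hc
    have hzero : c = 0 := by
      have : c = ∑ t, ∑ y : Fin k → Fin L, (∏ i, φ i (y i)) * g t y := by
        rw [hc, Finset.sum_comm]
        refine Finset.sum_congr rfl fun y _ => ?_
        rw [hsum y, Finset.mul_sum]
      rw [this]
      refine Finset.sum_eq_zero fun t _ => ?_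
      set j := idx t with hj
      set E := Equiv.funSplitAt j (Fin L) with hE
      have hEj : ∀ (a : Fin L) (y : {m : Fin k // m ≠ j} → Fin L), (E.symm (a, y)) j = a := by
        intro a y; simp [hE]
      have hEm : ∀ (a : Fin L) (y : {m : Fin k // m ≠ j} → Fin L) (m : {m : Fin k // m ≠ j}),
          (E.symm (a, y)) m.1 = y m := by
        intro a y m
        simp only [hE, Equiv.funSplitAt_symm_apply, Equiv.piSplitAt_symm_apply]
        rw [dif_neg m.2]
      rw [← Equiv.sum_comp E.symm (fun z => (∏ i, φ i (z i)) * g t z)]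
      rw [Fintype.sum_prod_type]
      have hterm : ∀ (a : Fin L) (y : {m : Fin k // m ≠ j} → Fin L),
          (∏ i, φ i ((E.symm (a, y)) i)) * g t (E.symm (a, y))
            = (φ j a * γ t a) * ((∏ m : {m : Fin k // m ≠ j}, φ m.1 (y m)) * η t y) := by
        intro a y
        have hprod : (∏ i, φ i ((E.symm (a, y)) i))
            = φ j a * ∏ m : {m : Fin k // m ≠ j}, φ m.1 (y m) := by
          rw [← Finset.mul_prod_erase Finset.univ _ (Finset.mem_univ j), hEj]
          congr 1
          rw [Finset.prod_subtype (Finset.univ.erase j) (p := fun m => m ≠ j)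
            (fun m => by simp) (fun m => φ m ((E.symm (a, y)) m))]
          exact Finset.prod_congr rfl fun m _ => by rw [hEm a y m]
        have hgt : g t (E.symm (a, y)) = γ t a * η t y := by
          rw [hfac t]
          congr 1
          · rw [← hj, hEj]
          · congr 1
            funext m
            exact hEm a y m
        rw [hprod, hgt]; ring
      rw [Finset.sum_congr rfl fun a _ => Finset.sum_congr rfl fun y _ => hterm a y]
      have : ∀ a : Fin L, ∑ y : {m : Fin k // m ≠ j} → Fin L,
          (φ j a * γ t a) * ((∏ m : {m : Fin k // m ≠ j}, φ m.1 (y m)) * η t y)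
          = (φ j a * γ t a) * ∑ y : {m : Fin k // m ≠ j} → Fin L,
              ((∏ m : {m : Fin k // m ≠ j}, φ m.1 (y m)) * η t y) := by
        intro a; rw [Finset.mul_sum]
      rw [Finset.sum_congr rfl fun a _ => this a, ← Finset.sum_mul]
      have hγV : γ t ∈ V j := by
        apply Submodule.subset_span
        simp only [hVset, Finset.coe_image, Set.mem_image]
        exact ⟨t, by simp [hfiber, hj], rfl⟩
      rw [hφann j (γ t) hγV, zero_mul]
    have hone : c = f x := by
      rw [hc]
      rw [Finset.sum_eq_single x]
      · have : (∏ i, φ i (x i)) = 1 := by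
          rw [Finset.prod_congr rfl fun i _ => hφ1 i, Finset.prod_const_one]
        rw [this, one_mul]
      · intro y _ hyx
        by_cases hfy : f y = 0
        · rw [hfy, mul_zero]
        · by_cases hΦ : (∏ i, φ i (y i)) = 0
          · rw [hΦ, zero_mul]
          · exfalso
            have hfac' : ∀ i, φ i (y i) ≠ 0 := by
              intro i hzero'
              exact hΦ (Finset.prod_eq_zero (Finset.mem_univ i) hzero')
            have : x = y := hanti x hx y hfy (fun i => hφsupp i _ (hfac' i))
            exact hyx this.symm
      · intro hnx; exact absurd (Finset.mem_univ x) hnx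
    rw [hzero] at hone
    exact hx hone.symm
  refine ⟨fun i => {x | f x ≠ 0 ∧ x i ∈ B i}, ?_, ?_⟩
  · ext x
    simp only [Set.mem_iUnion, Set.mem_setOf_eq]
    constructor
    · rintro ⟨i, hfx, _⟩; exact hfx
    · intro hfx
      obtain ⟨i, hi⟩ := hcover x hfx
      exact ⟨i, hfx, hi⟩
  · have hcard : ∀ i, Set.ncard ((fun x => x i) '' {x | f x ≠ 0 ∧ x i ∈ B i}) ≤ (fiber i).card := by
    -- per-coordinate cardinality bound
      intro i
      have hsub : ((fun x : Fin k → Fin L => x i) '' {x | f x ≠ 0 ∧ x i ∈ B i}) ⊆ B i := by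
        rintro ℓ ⟨x, ⟨_, hxB⟩, rfl⟩; exact hxB
      refine le_trans (Set.ncard_le_ncard hsub (Set.toFinite _)) ?_
      -- choose witnesses
      have hwit : ∀ ℓ : (B i), ∃ v ∈ V i, v ℓ.1 ≠ 0 ∧ ∀ b, le i ℓ.1 b → b ≠ ℓ.1 → v b = 0 :=
        fun ℓ => ℓ.2
      choose w hwV hwp hwvan using hwit
      have hindep : LinearIndependent F (fun ℓ : (B i) => (⟨w ℓ, hwV ℓ⟩ : (V i))) := by
        apply LinearIndependent.of_comp (V i).subtype
        rw [linearIndependent_iff']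
        intro s cc hsum0 t ht
        by_contra hct
        set T := s.filter (fun u => cc u ≠ 0) with hT
        have hTne : T.Nonempty := ⟨t, Finset.mem_filter.2 ⟨ht, hct⟩⟩
        obtain ⟨m, hmT, hmax⟩ := exists_rel_max (le i) (htot i) (fun h1 h2 => htrans i h1 h2)
          T (fun u : (B i) => (u : Fin L)) hTne
        have hmS := Finset.mem_of_mem_filter m hmT
        have hcm : cc m ≠ 0 := (Finset.mem_filter.1 hmT).2
        have heval := congrFun hsum0 (m : Fin L)
        rw [Finset.sum_apply] at heval
        simp only [Pi.smul_apply, smul_eq_mul, Pi.zero_apply] at heval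
        rw [Finset.sum_eq_single m] at heval
        · have : w m (m : Fin L) ≠ 0 := hwp m
          exact hcm (by
            rcases mul_eq_zero.1 heval with h | h
            · exact h
            · exact absurd h this)
        · intro u hu hum
          by_cases hcu : cc u = 0
          · simp only [Function.comp_apply, Submodule.coe_subtype]
            rw [hcu, zero_mul]
          · have huT : u ∈ T := Finset.mem_filter.2 ⟨hu, hcu⟩
            have hle' : le i (u : Fin L) (m : Fin L) := hmax u huT
            have hne : (m : Fin L) ≠ (u : Fin L) := fun h => hum (Subtype.ext h.symm)
            simp only [Function.comp_apply, Submodule.coe_subtype]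
            rw [hwvan u (m : Fin L) hle' hne, mul_zero]
        · intro hms; exact absurd hmS hms
      have hcard1 : (B i).ncard = Fintype.card (B i) := by
        rw [← Nat.card_coe_set_eq, Nat.card_eq_fintype_card]
      have hcard2 : Fintype.card (B i) ≤ Module.finrank F (V i) :=
        hindep.fintype_card_le_finrank
      have hcard3 : Module.finrank F (V i) ≤ (Vset i).card := finrank_span_finset_le_card (Vset i)
      have hcard4 : (Vset i).card ≤ (fiber i).card := Finset.card_image_le
      omega
    calc ∑ i, Set.ncard ((fun x => x i) '' {x | f x ≠ 0 ∧ x i ∈ B i})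
        ≤ ∑ i, (fiber i).card := Finset.sum_le_sum fun i _ => hcard i
      _ = r := by
          rw [← Finset.card_eq_sum_card_fiberwise (f := idx) (t := Finset.univ) (fun x _ => Finset.mem_univ _)]
          simp

lemma decomp_of_cover {k L : ℕ} {F : Type*} [Field F]
    (f : (Fin k → Fin L) → F) (S : Fin k → Set (Fin k → Fin L))
    (hS : (⋃ i, S i) = {x : Fin k → Fin L | f x ≠ 0}) :
    ∃ (r' : ℕ) (g : Fin r' → (Fin k → Fin L) → F),
      (∀ t, IsSliceRankOne (g t)) ∧ (∀ x, f x = ∑ t, g t x) ∧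
      r' ≤ ∑ i, Set.ncard ((fun x => x i) '' S i) := by
  classical
  set T : Fin k → Set (Fin k → Fin L) :=
    fun i => (S i ∩ {x | f x ≠ 0}) ∩ {x | ∀ j, j < i → x ∉ S j ∩ {x | f x ≠ 0}} with hT
  have hTsub : ∀ i, T i ⊆ S i := fun i x hx => hx.1.1
  have hTsupp : ∀ i, T i ⊆ {x | f x ≠ 0} := fun i x hx => hx.1.2
  have hTcover : ∀ x, f x ≠ 0 → ∃ i, x ∈ T i := by
    intro x hx
    have hxS : x ∈ ⋃ i, S i := hS ▸ hx
    obtain ⟨i₁, hi₁⟩ := Set.mem_iUnion.1 hxS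
    set M : Finset (Fin k) := Finset.univ.filter (fun i => x ∈ S i) with hM
    have hMne : M.Nonempty := ⟨i₁, Finset.mem_filter.2 ⟨Finset.mem_univ _, hi₁⟩⟩
    refine ⟨M.min' hMne, ⟨⟨(Finset.mem_filter.1 (M.min'_mem hMne)).2, hx⟩, ?_⟩⟩
    intro j hj hjx
    have hjM : j ∈ M := Finset.mem_filter.2 ⟨Finset.mem_univ _, hjx.1⟩
    exact absurd hj (not_lt.2 (M.min'_le j hjM))
  have hTdisj : ∀ i i', i ≠ i' → ∀ x, x ∈ T i → x ∈ T i' → False := by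
    intro i i' hne x hx hx'
    rcases lt_or_gt_of_ne hne with h | h
    · exact hx'.2 i h hx.1
    · exact hx.2 i' h hx'.1
  set P : (i : Fin k) → Finset (Fin L) :=
    fun i => (Set.toFinite ((fun x => x i) '' T i)).toFinset with hP
  have hPmem : ∀ (i : Fin k) (a : Fin L), a ∈ P i ↔ ∃ x ∈ T i, x i = a := by
    intro i a
    rw [hP, Set.Finite.mem_toFinset]
    constructor
    · rintro ⟨x, hx, rfl⟩; exact ⟨x, hx, rfl⟩
    · rintro ⟨x, hx, rfl⟩; exact ⟨x, hx, rfl⟩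
  set G : ((i : Fin k) × {a : Fin L // a ∈ P i}) → (Fin k → Fin L) → F :=
    fun u x => if (x u.1 = u.2.1 ∧ x ∈ T u.1) then f x else 0 with hG
  have hsro : ∀ u, IsSliceRankOne (G u) := by
    rintro ⟨i, ℓ⟩
    set ins : ({j : Fin k // j ≠ i} → Fin L) → (Fin k → Fin L) :=
      fun z m => if h : m = i then ℓ.1 else z ⟨m, h⟩ with hins
    have hinsx : ∀ x : Fin k → Fin L, x i = ℓ.1 → ins (fun m => x m.1) = x := by
      intro x hxi
      funext m
      by_cases h : m = i
      · subst h; simp [hins, hxi]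
      · simp [hins, h]
    refine ⟨i, fun a => if a = ℓ.1 then 1 else 0,
      fun z => if ins z ∈ T i then f (ins z) else 0, ?_, ?_, ?_⟩
    · intro h0
      have := congrFun h0 ℓ.1
      simp at this
    · have hm := (hPmem i ℓ.1).1 ℓ.2
      obtain ⟨x, hxT, hxi⟩ := hm
      intro h0
      have := congrFun h0 (fun m => x m.1)
      rw [hinsx x hxi] at this
      simp only [Pi.zero_apply] at this
      rw [if_pos hxT] at this
      exact (hTsupp i hxT) this
    · intro x
      show (if (x i = ℓ.1 ∧ x ∈ T i) then f x else 0) = _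
      dsimp only
      by_cases hxi : x i = ℓ.1
      · rw [if_pos hxi, one_mul, hinsx x hxi]
        by_cases hxT : x ∈ T i
        · rw [if_pos hxT, if_pos ⟨hxi, hxT⟩]
        · rw [if_neg hxT, if_neg (fun hcon => hxT hcon.2)]
      · rw [if_neg hxi, zero_mul]
        rw [if_neg (fun hcon => hxi hcon.1)]
  have hsum : ∀ x, f x = ∑ u, G u x := by
    intro x
    by_cases hfx : f x = 0
    · rw [hfx]
      refine (Finset.sum_eq_zero fun u _ => ?_).symm
      rcases u with ⟨i, ℓ⟩
      show (if (x i = ℓ.1 ∧ x ∈ T i) then f x else 0) = 0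
      split
      · exact hfx
      · rfl
    · obtain ⟨i₀, hi₀⟩ := hTcover x hfx
      have hmem : x i₀ ∈ P i₀ := (hPmem i₀ (x i₀)).2 ⟨x, hi₀, rfl⟩
      rw [Finset.sum_eq_single (⟨i₀, ⟨x i₀, hmem⟩⟩ : (i : Fin k) × {a : Fin L // a ∈ P i})]
      · show f x = (if (x i₀ = x i₀ ∧ x ∈ T i₀) then f x else 0)
        rw [if_pos ⟨rfl, hi₀⟩]
      · rintro ⟨i, ℓ⟩ _ hne
        show (if (x i = ℓ.1 ∧ x ∈ T i) then f x else 0) = 0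
        rw [if_neg]
        rintro ⟨hℓ, hxT⟩
        have hii : i = i₀ := by
          by_contra hii
          exact hTdisj i i₀ hii x hxT hi₀
        subst hii
        exact hne (congrArg (Sigma.mk i) (Subtype.ext hℓ.symm))
      · intro h; exact absurd (Finset.mem_univ _) h
  have hcard : Fintype.card ((i : Fin k) × {a : Fin L // a ∈ P i}) = ∑ i, (P i).card := by
    rw [Fintype.card_sigma]
    exact Finset.sum_congr rfl fun i _ => Fintype.card_coe _
  set e : Fin (Fintype.card ((i : Fin k) × {a : Fin L // a ∈ P i}))
      ≃ ((i : Fin k) × {a : Fin L // a ∈ P i}) :=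
    (Fintype.equivFin _).symm with he
  refine ⟨_, fun t => G (e t), fun t => hsro (e t), ?_, ?_⟩
  · intro x
    rw [Equiv.sum_comp e (fun u => G u x)]
    exact hsum x
  · rw [hcard]
    refine Finset.sum_le_sum fun i _ => ?_
    have h1 : (P i).card = Set.ncard ((fun x => x i) '' T i) :=
      (Set.ncard_eq_toFinset_card _ (Set.toFinite _)).symm
    rw [h1]
    exact Set.ncard_le_ncard (Set.image_mono (hTsub i)) (Set.toFinite _)


/-- Sawin–Tao: if the support of `f` is an antichain for the product of `k`
total orders on `[L]`, then the slice rank of `f` is the minimum over partitions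
`S = S₁ ∪ ⋯ ∪ S_k` of `|π₁(S₁)| + ⋯ + |π_k(S_k)|`. -/
theorem stmt_6 {k L : ℕ} (hL : 1 ≤ L) (hk : 2 ≤ k) {F : Type*} [Field F]
    (le : Fin k → Fin L → Fin L → Prop) (hle : ∀ i, IsLinearOrder (Fin L) (le i))
    (f : (Fin k → Fin L) → F)
    (hanti : ∀ x ∈ {x : Fin k → Fin L | f x ≠ 0}, ∀ y ∈ {x : Fin k → Fin L | f x ≠ 0},
      (∀ i, le i (x i) (y i)) → x = y) :
    sliceRank f = sInf {N : ℕ | ∃ S : Fin k → Set (Fin k → Fin L),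
      (⋃ i, S i) = {x : Fin k → Fin L | f x ≠ 0} ∧
      N = ∑ i, Set.ncard ((fun x => x i) '' S i)} := by
  classical
  haveI : NeZero k := ⟨by omega⟩
  set coverSet : Set ℕ := {N : ℕ | ∃ S : Fin k → Set (Fin k → Fin L),
      (⋃ i, S i) = {x : Fin k → Fin L | f x ≠ 0} ∧
      N = ∑ i, Set.ncard ((fun x => x i) '' S i)} with hcoverSet
  have hcne : coverSet.Nonempty := by
    refine ⟨_, ⟨fun i => if i = 0 then {x : Fin k → Fin L | f x ≠ 0} else ∅, ?_, rfl⟩⟩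
    apply Set.Subset.antisymm
    · refine Set.iUnion_subset fun i => ?_
      by_cases h : i = 0
      · simp [h]
      · simp [h]
    · intro x hx
      exact Set.mem_iUnion.2 ⟨0, by simpa using hx⟩
  have hNmem := Nat.sInf_mem hcne
  obtain ⟨S, hS, hNsum⟩ := hNmem
  obtain ⟨r', g', hg', hsum', hr'le⟩ := decomp_of_cover f S hS
  have hmem' : r' ∈ {r : ℕ | ∃ g : Fin r → (Fin k → Fin L) → F,
      (∀ t, IsSliceRankOne (g t)) ∧ ∀ x, f x = ∑ t, g t x} := ⟨g', hg', hsum'⟩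
  have hub : sliceRank f ≤ sInf coverSet := by
    refine le_trans (Nat.sInf_le hmem') ?_
    rw [← hNsum] at hr'le
    exact hr'le
  have hdne : {r : ℕ | ∃ g : Fin r → (Fin k → Fin L) → F,
      (∀ t, IsSliceRankOne (g t)) ∧ ∀ x, f x = ∑ t, g t x}.Nonempty := ⟨r', hmem'⟩
  have hrmem : sliceRank f ∈ {r : ℕ | ∃ g : Fin r → (Fin k → Fin L) → F,
      (∀ t, IsSliceRankOne (g t)) ∧ ∀ x, f x = ∑ t, g t x} := by
    rw [sliceRank]
    exact Nat.sInf_mem hdne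
  obtain ⟨g, hg, hsum⟩ := hrmem
  obtain ⟨S', hS'union, hS'le⟩ := cover_of_decomp le hle f hanti g hg hsum
  have hlb : sInf coverSet ≤ sliceRank f :=
    le_trans (Nat.sInf_le ⟨S', hS'union, rfl⟩) hS'le
  exact le_antisymm hub hlb
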